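/- Let A be the wave operator A = [[0, I], [Δ, 0]] on T³ and let Π_{τ^{-1}} = diag(π_{τ^{-1}}, π_{τ^{-1}}) be the frequency cutoff at level τ^{-1}. For every τ ∈ (0,1] there exists an operator Ψ_τ, bounded on H^r × H^{r−1} uniformly in τ for every r ∈ ℝ, such that τ A Π_{τ^{-1}} = (e^{τA} − I) Ψ_τ. Explicitly, Ψ_τ = −(τ/2) Π_{τ^{-1}} [[ |∇| sin(τ|∇|)/(cos(τ|∇|) − I), I ], [ Δ, |∇| sin(τ|∇|)/(cos(τ|∇|) − I) ]], and its uniform boundedness follows from the boundedness of x ↦ x sin x/(cos x − 1) on [0, √3]. -/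

import Mathlib

open scoped BigOperators

/-- Euclidean norm `|k|` of a frequency `k ∈ ℤ³`. -/
noncomputable def knrm (k : Fin 3 → ℤ) : ℝ := Real.sqrt (∑ i, ((k i : ℝ))^2)

/-- `|k|_∞`, the sup-norm of a frequency, as a real number. -/
noncomputable def kinf (k : Fin 3 → ℤ) : ℝ := ((Finset.univ.sup fun i => (k i).natAbs : ℕ) : ℝ)

/-- The Fourier symbol of the multiplier `t sinc(t|∇|)` at frequency of modulus `r`. -/
noncomputable def tsinc (t r : ℝ) : ℝ := if r = 0 then t else Real.sin (t*r) / r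

/-- The symbol of the wave group `e^{tA}`. -/
noncomputable def Ehat (t : ℝ) (k : Fin 3 → ℤ) : Matrix (Fin 2) (Fin 2) ℝ :=
  !![Real.cos (t * knrm k), tsinc t (knrm k);
     -(knrm k) * Real.sin (t * knrm k), Real.cos (t * knrm k)]

/-- The symbol of the wave operator `A = [[0, I], [Δ, 0]]`. -/
noncomputable def Ahat (k : Fin 3 → ℤ) : Matrix (Fin 2) (Fin 2) ℝ :=
  !![0, 1; -(knrm k)^2, 0]

/-- The continuous extension of `x ↦ x sin x/(cos x − 1)` (value `−2` at `0`), which is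
bounded on `[0, √3]`. -/
noncomputable def rho (x : ℝ) : ℝ := if x = 0 then -2 else x * Real.sin x / (Real.cos x - 1)

/-- The symbol of the operator
`Ψ_τ = −(τ/2) Π_{τ^{-1}} [[ |∇| sin(τ|∇|)/(cos(τ|∇|) − I), I ], [ Δ, |∇| sin(τ|∇|)/(cos(τ|∇|) − I) ]]`;
the diagonal multiplier at mode `k` equals `ρ(τ|k|)/τ`. -/
noncomputable def Psihat (τ : ℝ) (k : Fin 3 → ℤ) : Matrix (Fin 2) (Fin 2) ℝ :=
  if kinf k ≤ 1/τ then
    (-(τ/2)) • !![rho (τ * knrm k) / τ, 1; -(knrm k)^2, rho (τ * knrm k) / τ]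
  else 0

lemma kinf_nonneg (k : Fin 3 → ℤ) : 0 ≤ kinf k := Nat.cast_nonneg _
lemma knrm_nonneg (k : Fin 3 → ℤ) : 0 ≤ knrm k := Real.sqrt_nonneg _

lemma knrm_le (k : Fin 3 → ℤ) : knrm k ≤ Real.sqrt 3 * kinf k := by
  have hb : ∀ i, ((k i : ℝ))^2 ≤ (kinf k)^2 := by
    intro i
    have h1 : ((k i).natAbs : ℝ) ≤ kinf k := by
      unfold kinf
      have := Finset.le_sup (f := fun i => (k i).natAbs) (Finset.mem_univ i)
      exact_mod_cast this
    have h2 : |((k i : ℝ))| = ((k i).natAbs : ℝ) := by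
      rw [Nat.cast_natAbs, Int.cast_abs]
    calc ((k i : ℝ))^2 = |((k i : ℝ))|^2 := (sq_abs _).symm
    _ ≤ (kinf k)^2 := by rw [h2]; exact pow_le_pow_left₀ (Nat.cast_nonneg _) h1 2
  have hsum : (∑ i, ((k i : ℝ))^2) ≤ 3 * (kinf k)^2 := by
    calc (∑ i, ((k i : ℝ))^2) ≤ ∑ _i : Fin 3, (kinf k)^2 := Finset.sum_le_sum fun i _ => hb i
    _ = 3 * (kinf k)^2 := by
        rw [Finset.sum_const, Finset.card_univ, Fintype.card_fin]
        push_cast; ring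
  calc knrm k ≤ Real.sqrt (3 * (kinf k)^2) := Real.sqrt_le_sqrt hsum
  _ = Real.sqrt 3 * kinf k := by
      rw [Real.sqrt_mul (by norm_num), Real.sqrt_sq (kinf_nonneg k)]

lemma sqrt3_lt_two : Real.sqrt 3 < 2 := by
  nlinarith [Real.sq_sqrt (by norm_num : (0:ℝ) ≤ 3), Real.sqrt_nonneg 3]

lemma rho_eq {x : ℝ} (hx : 0 < x) (hxπ : x < 2) :
    rho x = -(x * Real.cos (x/2) / Real.sin (x/2)) := by
  have hs : 0 < Real.sin (x/2) :=
    Real.sin_pos_of_pos_of_lt_pi (by linarith) (by nlinarith [Real.pi_gt_three])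
  have hsin : Real.sin x = 2 * Real.sin (x/2) * Real.cos (x/2) := by
    have h := Real.sin_two_mul (x/2)
    rw [show 2*(x/2) = x by ring] at h; linarith
  have hcos : Real.cos x - 1 = -(2 * Real.sin (x/2)^2) := by
    have h := Real.cos_two_mul (x/2)
    have h2 := Real.sin_sq_add_cos_sq (x/2)
    rw [show 2*(x/2) = x by ring] at h; linarith
  unfold rho
  rw [if_neg hx.ne', hsin, hcos]
  field_simp

lemma rho_abs_le {x : ℝ} (hx : 0 ≤ x) (hx3 : x ≤ Real.sqrt 3) : |rho x| ≤ 3 := by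
  rcases eq_or_lt_of_le hx with h0 | h0
  · simp [rho, ← h0]; norm_num
  · have hx2 : x < 2 := lt_of_le_of_lt hx3 sqrt3_lt_two
    have hs : 0 < Real.sin (x/2) :=
      Real.sin_pos_of_pos_of_lt_pi (by linarith) (by nlinarith [Real.pi_gt_three])
    have hcube : x/2 - (x/2)^3/4 < Real.sin (x/2) :=
      by have := Real.sin_gt_sub_cube (x := x/2) (by linarith); nlinarith [pow_pos (half_pos h0) 3]
    have hs38 : 3*x/8 ≤ Real.sin (x/2) := by
      nlinarith [mul_nonneg h0.le (by nlinarith : (0:ℝ) ≤ 4 - x^2)]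
    rw [rho_eq h0 hx2, abs_neg, abs_div, abs_mul, abs_of_pos h0, abs_of_pos hs]
    rw [div_le_iff₀ hs]
    nlinarith [Real.abs_cos_le_one (x/2)]

lemma key_identity (τ r c s : ℝ) (hτ : τ ≠ 0) (hr : r ≠ 0) (hc : c - 1 ≠ 0)
    (hpy : s^2 + c^2 = 1) :
    τ • (!![0,1;-r^2,0] : Matrix (Fin 2) (Fin 2) ℝ) =
    (!![c, s/r; -r*s, c] - 1) * ((-(τ/2)) • !![(τ*r) * s / (c-1) / τ, 1; -r^2, (τ*r)*s/(c-1)/τ]) := by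
  ext i j
  fin_cases i <;> fin_cases j <;>
    simp [Matrix.mul_apply, Fin.sum_univ_two, Matrix.one_apply, Matrix.sub_apply,
      Matrix.smul_apply] <;>
    field_simp <;>
    first
      | ring1
      | linear_combination (-(τ*r/2))*hpy
      | linear_combination ((τ*r/2))*hpy
      | linear_combination (2*τ^2*r)*hpy
      | linear_combination (-(2*τ^2*r^2))*hpy
      | linear_combination hpy
      | linear_combination (-1)*hpy

set_option maxHeartbeats 1600000 in
/-- on the Fourier side. For every `τ ∈ (0,1]` the identity
`τ A Π_{τ^{-1}} = (e^{τA} − I) Ψ_τ` holds at every mode `k`, and `Ψ_τ` is bounded on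
`H^r × H^{r−1}` uniformly in `τ` and `r`; the latter is encoded by the mode-wise entry
bounds `|Ψ₀₀|, |Ψ₁₁| ≤ C`, `|Ψ₀₁| ≤ C⟨k⟩^{−1}`, `|Ψ₁₀| ≤ C⟨k⟩`, `⟨k⟩ = (1+|k|²)^{1/2}`,
with `C` independent of `τ` and `k`. -/
theorem stmt12 :
    ∃ C > (0:ℝ), ∀ τ : ℝ, 0 < τ → τ ≤ 1 → ∀ k : Fin 3 → ℤ,
      ((if kinf k ≤ 1/τ then τ • Ahat k else 0) = (Ehat τ k - 1) * Psihat τ k) ∧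
      |Psihat τ k 0 0| ≤ C ∧ |Psihat τ k 1 1| ≤ C ∧
      |Psihat τ k 0 1| ≤ C / Real.sqrt (1 + (knrm k)^2) ∧
      |Psihat τ k 1 0| ≤ C * Real.sqrt (1 + (knrm k)^2) := by
  refine ⟨8, by norm_num, ?_⟩
  intro τ hτ hτ1 k
  have hsq := Real.sq_sqrt (by positivity : (0:ℝ) ≤ 1 + (knrm k)^2)
  have hsn := Real.sqrt_nonneg (1 + (knrm k)^2)
  have hgk1 : (1:ℝ) ≤ Real.sqrt (1 + (knrm k)^2) := by
    nlinarith [sq_nonneg (knrm k)]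
  have hgk0 : (0:ℝ) < Real.sqrt (1 + (knrm k)^2) := lt_of_lt_of_le one_pos hgk1
  by_cases hcut : kinf k ≤ 1/τ
  · -- within the cutoff
    have hr : 0 ≤ knrm k := knrm_nonneg k
    have hx0 : 0 ≤ τ * knrm k := mul_nonneg hτ.le hr
    have hx3 : τ * knrm k ≤ Real.sqrt 3 := by
      calc τ * knrm k ≤ τ * (Real.sqrt 3 * kinf k) :=
            mul_le_mul_of_nonneg_left (knrm_le k) hτ.le
      _ ≤ τ * (Real.sqrt 3 * (1/τ)) := by
            refine mul_le_mul_of_nonneg_left ?_ hτ.le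
            exact mul_le_mul_of_nonneg_left hcut (Real.sqrt_nonneg 3)
      _ = Real.sqrt 3 := by field_simp
    have hPsi : Psihat τ k =
        (-(τ/2)) • !![rho (τ * knrm k) / τ, 1; -(knrm k)^2, rho (τ * knrm k) / τ] := by
      rw [Psihat, if_pos hcut]
    have hP00 : Psihat τ k 0 0 = -(rho (τ * knrm k) / 2) := by
      have hτ' : τ ≠ 0 := ne_of_gt hτ
      rw [hPsi]; simp
      first | (field_simp; ring) | field_simp
    have hP11 : Psihat τ k 1 1 = -(rho (τ * knrm k) / 2) := by
      have hτ' : τ ≠ 0 := ne_of_gt hτ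
      rw [hPsi]; simp
      first | (field_simp; ring) | field_simp
    have hP01 : Psihat τ k 0 1 = -(τ/2) := by rw [hPsi]; simp
    have hP10 : Psihat τ k 1 0 = τ/2 * (knrm k)^2 := by
      rw [hPsi]; simp
      first | ring | skip
    have hrho := rho_abs_le hx0 hx3
    have hsle : Real.sqrt (1 + (knrm k)^2) ≤ 1 + knrm k := by
      nlinarith
    have hrle : knrm k ≤ Real.sqrt (1 + (knrm k)^2) := by
      nlinarith
    refine ⟨?_, ?_, ?_, ?_, ?_⟩
    · rw [if_pos hcut, hPsi]
      rcases eq_or_lt_of_le hr with hr0 | hr0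
      · have h0 : knrm k = 0 := hr0.symm
        have hτ' : τ ≠ 0 := ne_of_gt hτ
        ext i j
        fin_cases i <;> fin_cases j <;>
          simp [Ehat, Ahat, tsinc, rho, h0, Matrix.mul_apply, Fin.sum_univ_two,
            Matrix.one_apply] <;>
          field_simp <;>
          try (exact Or.inl (by ring))
      · have hx : 0 < τ * knrm k := mul_pos hτ hr0
        have hxne : τ * knrm k ≠ 0 := ne_of_gt hx
        have hτ' : τ ≠ 0 := ne_of_gt hτ
        have hc1 : Real.cos (τ * knrm k) < 1 := by
          have h := Real.cos_two_mul ((τ * knrm k)/2)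
          have h2 := Real.sin_sq_add_cos_sq ((τ * knrm k)/2)
          have hs2 : 0 < Real.sin ((τ * knrm k)/2) :=
            Real.sin_pos_of_pos_of_lt_pi (by linarith)
              (by nlinarith [Real.pi_gt_three, sqrt3_lt_two])
          rw [show 2*((τ * knrm k)/2) = τ * knrm k by ring] at h
          nlinarith
        have hcne : Real.cos (τ * knrm k) - 1 ≠ 0 := by
          intro h; rw [sub_eq_zero] at h; exact absurd h (ne_of_lt hc1)
        have hpy := Real.sin_sq_add_cos_sq (τ * knrm k)
        have hE : Ehat τ k = !![Real.cos (τ * knrm k), Real.sin (τ * knrm k) / knrm k;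
            -(knrm k) * Real.sin (τ * knrm k), Real.cos (τ * knrm k)] := by
          rw [Ehat, tsinc, if_neg hr0.ne']
        have hrho' : rho (τ * knrm k) =
            (τ * knrm k) * Real.sin (τ * knrm k) / (Real.cos (τ * knrm k) - 1) := by
          rw [rho, if_neg hxne]
        rw [Ahat, hE, hrho']
        exact key_identity τ (knrm k) (Real.cos (τ * knrm k)) (Real.sin (τ * knrm k))
          hτ' hr0.ne' hcne hpy
    · rw [hP00, abs_neg, abs_div, abs_of_pos (by norm_num : (0:ℝ) < 2)]; linarith
    · rw [hP11, abs_neg, abs_div, abs_of_pos (by norm_num : (0:ℝ) < 2)]; linarith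
    · rw [hP01, abs_neg, abs_of_pos (by positivity)]
      rw [div_le_div_iff₀ two_pos hgk0]
      nlinarith [mul_le_mul_of_nonneg_left hsle hτ.le, sqrt3_lt_two]
    · rw [hP10, abs_of_nonneg (by positivity)]
      nlinarith [mul_le_mul_of_nonneg_left hrle (by positivity : (0:ℝ) ≤ τ * knrm k),
        sqrt3_lt_two, mul_le_mul_of_nonneg_right hx3 hr]
  · -- outside the cutoff
    have hPsi : Psihat τ k = 0 := by rw [Psihat, if_neg hcut]
    have hz : ∀ i j : Fin 2, Psihat τ k i j = 0 := by
      intro i j; rw [hPsi]; rfl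
    refine ⟨by rw [if_neg hcut, hPsi, mul_zero], ?_, ?_, ?_, ?_⟩
    · rw [hz 0 0, abs_zero]; norm_num
    · rw [hz 1 1, abs_zero]; norm_num
    · rw [hz 0 1, abs_zero]; positivity
    · rw [hz 1 0, abs_zero]; positivity
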